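/- Let Z₁,…,Z_m be independent random elements of a compact metric space M, each with law ν_j satisfying the (a,b)-standard lower bound ν_j(B_ε(u)) ≥ min(1, a·ε^b) for all u in a fixed compact set S and 0 < ε < ε₀. If U = {u₁,…,u_N} ⊆ S is a finite ε-dense subset of S, then P(d_H({Z₁,…,Z_m}, S) > 2ε) ≤ N·exp(−m·min(1, a·ε^b)). -/

import Mathlib

open MeasureTheory Metric
open scoped ENNReal

/-- Concentration of the empirical support: for independent points `Z₁,…,Z_m` taking
values a.s. in the compact set `S` and satisfying the `(a,b)`-standard lower bound on
balls centered in `S`, and for a finite `ε`-dense subset `{u₁,…,u_N}` of `S`, the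
probability that the Hausdorff distance between `{Z₁,…,Z_m}` and `S` exceeds `2ε` is at
most `N exp(−m min(1, a ε^b))`. -/
theorem prob_hausdorff_gt {Ω : Type*} [MeasurableSpace Ω]
    (P : Measure Ω) [IsProbabilityMeasure P]
    {M : Type*} [MetricSpace M] [CompactSpace M] [MeasurableSpace M] [BorelSpace M]
    (S : Set M) (hS : IsCompact S) (hSne : S.Nonempty)
    (a b ε₀ ε : ℝ) (ha : 0 < a) (hb : 0 < b)
    (hε₀ : ε₀ ∈ Set.Ioo (0 : ℝ) 1) (hε : 0 < ε) (hεlt : ε < ε₀)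
    (m : ℕ) (hm : 0 < m) (Z : Fin m → Ω → M) (hmeas : ∀ j, Measurable (Z j))
    (hindep : ProbabilityTheory.iIndepFun Z P)
    (hinS : ∀ j, ∀ᵐ ω ∂P, Z j ω ∈ S)
    (hlow : ∀ j, ∀ u ∈ S,
      ENNReal.ofReal (min 1 (a * ε ^ b)) ≤ P {ω | Z j ω ∈ ball u ε})
    (N : ℕ) (u : Fin N → M) (hu : ∀ i, u i ∈ S)
    (hdense : ∀ s ∈ S, ∃ i, dist s (u i) < ε) :
    P {ω | 2 * ε < hausdorffDist (Set.range fun j => Z j ω) S}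
      ≤ (N : ℝ≥0∞) * ENNReal.ofReal (Real.exp (-(m : ℝ) * min 1 (a * ε ^ b))) := by
  set p : ℝ := min 1 (a * ε ^ b) with hp
  have hp0 : 0 ≤ p := le_min zero_le_one (by positivity)
  have hp1 : p ≤ 1 := min_le_left _ _
  set E : Fin N → Set Ω := fun i => ⋂ j, Z j ⁻¹' (ball (u i) ε)ᶜ with hE
  -- Step 1 : a.e. inclusion of the bad event in ⋃ i, E i
  have hsub : P {ω | 2 * ε < hausdorffDist (Set.range fun j => Z j ω) S}
      ≤ P (⋃ i, E i) := by
    apply measure_mono_ae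
    filter_upwards [ae_all_iff.2 hinS] with ω hωS
    intro hωbad
    have hωbad' : 2 * ε < hausdorffDist (Set.range fun j => Z j ω) S := hωbad
    by_contra hnot
    have hnot' : ω ∉ ⋃ i, E i := hnot
    have hnot2 : ∀ i, ∃ j, Z j ω ∈ ball (u i) ε := by
      intro i
      by_contra h
      push_neg at h
      exact hnot' (Set.mem_iUnion.2 ⟨i, Set.mem_iInter.2 fun j => h j⟩)
    have hle : hausdorffDist (Set.range fun j => Z j ω) S ≤ 2 * ε := by
      apply hausdorffDist_le_of_mem_dist (by positivity)
      · rintro x ⟨j, rfl⟩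
        exact ⟨Z j ω, hωS j, by simp [hε.le]⟩
      · intro s hs
        obtain ⟨i, hi⟩ := hdense s hs
        obtain ⟨j, hj⟩ := hnot2 i
        refine ⟨Z j ω, ⟨j, rfl⟩, ?_⟩
        have := dist_triangle s (u i) (Z j ω)
        rw [mem_ball, dist_comm] at hj
        linarith
    linarith [hωbad']
  refine hsub.trans ?_
  -- Step 2 : bound P (E i)
  have hEbound : ∀ i, P (E i) ≤ ENNReal.ofReal (Real.exp (-(m : ℝ) * p)) := by
    intro i
    have hprod : P (E i) = ∏ j : Fin m, P (Z j ⁻¹' (ball (u i) ε)ᶜ) := by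
      have := hindep.measure_inter_preimage_eq_mul Finset.univ
        (sets := fun _ => (ball (u i) ε)ᶜ)
        (fun j _ => measurableSet_ball.compl)
      simpa [hE, Set.iInter_coe_set] using this
    have hfac : ∀ j : Fin m, P (Z j ⁻¹' (ball (u i) ε)ᶜ) ≤ ENNReal.ofReal (1 - p) := by
      intro j
      have hmeasset : MeasurableSet (Z j ⁻¹' ball (u i) ε) :=
        (hmeas j) measurableSet_ball
      have hcompl : P (Z j ⁻¹' (ball (u i) ε)ᶜ) = 1 - P (Z j ⁻¹' ball (u i) ε) := by
        rw [Set.preimage_compl, prob_compl_eq_one_sub hmeasset]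
      rw [hcompl]
      have hlow' : ENNReal.ofReal p ≤ P (Z j ⁻¹' ball (u i) ε) := hlow j (u i) (hu i)
      calc 1 - P (Z j ⁻¹' ball (u i) ε) ≤ 1 - ENNReal.ofReal p :=
            tsub_le_tsub_left hlow' 1
        _ = ENNReal.ofReal (1 - p) := by
            rw [ENNReal.ofReal_sub 1 hp0, ENNReal.ofReal_one]
        _ ≤ ENNReal.ofReal (1 - p) := le_rfl
    calc P (E i) = ∏ j : Fin m, P (Z j ⁻¹' (ball (u i) ε)ᶜ) := hprod
      _ ≤ ∏ _j : Fin m, ENNReal.ofReal (1 - p) :=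
          Finset.prod_le_prod' fun j _ => hfac j
      _ = ENNReal.ofReal ((1 - p) ^ m) := by
          rw [Finset.prod_const, Finset.card_univ, Fintype.card_fin,
            ENNReal.ofReal_pow (by linarith)]
      _ ≤ ENNReal.ofReal (Real.exp (-(m : ℝ) * p)) := by
          apply ENNReal.ofReal_le_ofReal
          have h1 : 1 - p ≤ Real.exp (-p) := by
            have := Real.add_one_le_exp (-p); linarith
          calc (1 - p) ^ m ≤ Real.exp (-p) ^ m :=
                pow_le_pow_left₀ (by linarith) h1 m
            _ = Real.exp (-(m : ℝ) * p) := by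
                rw [← Real.exp_nat_mul]; ring_nf
  calc P (⋃ i, E i) ≤ ∑' i, P (E i) := measure_iUnion_le E
    _ = ∑ i : Fin N, P (E i) := tsum_fintype _
    _ ≤ ∑ _i : Fin N, ENNReal.ofReal (Real.exp (-(m : ℝ) * p)) :=
        Finset.sum_le_sum fun i _ => hEbound i
    _ = (N : ℝ≥0∞) * ENNReal.ofReal (Real.exp (-(m : ℝ) * p)) := by
        rw [Finset.sum_const, Finset.card_univ, Fintype.card_fin, nsmul_eq_mul]
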